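/- arXiv:1309.0619 — 2 statements merged into one kernel-verified Lean document; each statement's English description precedes it below -/
import Mathlib

section
/- Let d ≥ 1, K > 0, k₁ > 0 and let p ≥ 2 be a real number. There exist constants α_p ≥ 0 and β_p ≥ 0, depending only on p, K and k₁ and on the values ‖b(0)‖ and ‖σ(0)‖, such that: whenever b : ℝ^d → ℝ^d satisfies ⟨b(y) − b(x), y − x⟩ ≤ −K‖y − x‖² for all x, y; f : ℝ^d → ℝ^d satisfies ‖f(x)‖ ≤ k₁(1 + ‖x‖) for all x; and σ : ℝ^d → M_{d×d}(ℝ) is k₁-Lipschitz in the Frobenius norm, then for every x ∈ ℝ^d with x ≠ 0, p‖x‖^{p−2}⟨x, b(x) + f(x)⟩ + (p/2)‖x‖^{p−2}‖σ(x)‖² + (p(p−2)/2)‖x‖^{p−4}‖σ(x)ᵀ x‖² ≤ β_p‖x‖^p + α_p‖x‖^{p−2}. -/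
open scoped RealInnerProductSpace

noncomputable def frobNorm {d : ℕ} (A : Matrix (Fin d) (Fin d) ℝ) : ℝ :=
  Real.sqrt (∑ i, ∑ j, (A i j) ^ 2)

noncomputable def eucNorm {d : ℕ} (v : Fin d → ℝ) : ℝ :=
  Real.sqrt (∑ i, (v i) ^ 2)

lemma frobNorm_nonneg {d : ℕ} (A : Matrix (Fin d) (Fin d) ℝ) : 0 ≤ frobNorm A :=
  Real.sqrt_nonneg _

lemma frobNorm_sq {d : ℕ} (A : Matrix (Fin d) (Fin d) ℝ) :
    frobNorm A ^ 2 = ∑ i, ∑ j, (A i j) ^ 2 :=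
  Real.sq_sqrt (Finset.sum_nonneg fun _ _ => Finset.sum_nonneg fun _ _ => sq_nonneg _)

lemma frobNorm_eq_norm {d : ℕ} (A : Matrix (Fin d) (Fin d) ℝ) :
    frobNorm A = ‖((WithLp.equiv 2 ((Fin d × Fin d) → ℝ)).symm
      (fun ij => A ij.1 ij.2) : EuclideanSpace ℝ (Fin d × Fin d))‖ := by
  simp [frobNorm, EuclideanSpace.norm_eq, Fintype.sum_prod_type, Real.norm_eq_abs, sq_abs]

lemma frobNorm_triangle {d : ℕ} (A B : Matrix (Fin d) (Fin d) ℝ) :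
    frobNorm A ≤ frobNorm (A - B) + frobNorm B := by
  rw [frobNorm_eq_norm, frobNorm_eq_norm, frobNorm_eq_norm]
  have h : ((WithLp.equiv 2 ((Fin d × Fin d) → ℝ)).symm
      (fun ij => A ij.1 ij.2) : EuclideanSpace ℝ (Fin d × Fin d))
      = (WithLp.equiv 2 ((Fin d × Fin d) → ℝ)).symm (fun ij => (A - B) ij.1 ij.2)
        + (WithLp.equiv 2 ((Fin d × Fin d) → ℝ)).symm (fun ij => B ij.1 ij.2) := by
    change WithLp.toLp 2 _ = WithLp.toLp 2 _ + WithLp.toLp 2 _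
    rw [← WithLp.toLp_add]
    congr 1
    funext ij
    simp [Matrix.sub_apply]
  rw [h]
  exact norm_add_le _ _

lemma eucNorm_mulVec_sq_le {d : ℕ} (A : Matrix (Fin d) (Fin d) ℝ) (v : Fin d → ℝ) :
    eucNorm (A.transpose.mulVec v) ^ 2 ≤ frobNorm A ^ 2 * ∑ i, (v i) ^ 2 := by
  have h1 : eucNorm (A.transpose.mulVec v) ^ 2 = ∑ j, (∑ i, A i j * v i) ^ 2 := by
    rw [eucNorm, Real.sq_sqrt (Finset.sum_nonneg fun _ _ => sq_nonneg _)]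
    simp [Matrix.mulVec, Matrix.transpose_apply, dotProduct]
  rw [h1, frobNorm_sq]
  calc ∑ j, (∑ i, A i j * v i) ^ 2
      ≤ ∑ j, (∑ i, (A i j) ^ 2) * ∑ i, (v i) ^ 2 :=
        Finset.sum_le_sum fun j _ => Finset.sum_mul_sq_le_sq_mul_sq _ _ _
    _ = (∑ i, ∑ j, (A i j) ^ 2) * ∑ i, (v i) ^ 2 := by
        rw [← Finset.sum_mul, Finset.sum_comm]

set_option maxHeartbeats 1000000 in
theorem stmt3 {d : ℕ} (hd : 1 ≤ d) (K k₁ p : ℝ) (hK : 0 < K) (hk₁ : 0 < k₁)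
    (hp : 2 ≤ p) (Cb Cσ : ℝ) :
    ∃ αp βp : ℝ, 0 ≤ αp ∧ 0 ≤ βp ∧
      ∀ (b f : EuclideanSpace ℝ (Fin d) → EuclideanSpace ℝ (Fin d))
        (σ : EuclideanSpace ℝ (Fin d) → Matrix (Fin d) (Fin d) ℝ),
        ‖b 0‖ = Cb → frobNorm (σ 0) = Cσ →
        (∀ x y, ⟪b y - b x, y - x⟫ ≤ -K * ‖y - x‖ ^ 2) →
        (∀ x, ‖f x‖ ≤ k₁ * (1 + ‖x‖)) →
        (∀ x y, frobNorm (σ x - σ y) ≤ k₁ * ‖x - y‖) →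
        ∀ x : EuclideanSpace ℝ (Fin d), x ≠ 0 →
          p * ‖x‖ ^ (p - 2) * ⟪x, b x + f x⟫
            + (p / 2) * ‖x‖ ^ (p - 2) * frobNorm (σ x) ^ 2
            + (p * (p - 2) / 2) * ‖x‖ ^ (p - 4)
              * eucNorm ((σ x).transpose.mulVec (WithLp.equiv 2 (Fin d → ℝ) x)) ^ 2
          ≤ βp * ‖x‖ ^ p + αp * ‖x‖ ^ (p - 2) := by
  have hp0 : (0:ℝ) < p := by linarith
  refine ⟨p * (|Cb| + k₁) + p * (p - 1) * Cσ ^ 2,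
          p * (|Cb| + 2 * k₁) + p * (p - 1) * k₁ ^ 2, ?_, ?_, ?_⟩
  · have h1 : (0:ℝ) ≤ p * (|Cb| + k₁) := mul_nonneg hp0.le (by positivity)
    have h2 : (0:ℝ) ≤ p * (p - 1) * Cσ ^ 2 :=
      mul_nonneg (mul_nonneg hp0.le (by linarith)) (sq_nonneg _)
    linarith
  · have h1 : (0:ℝ) ≤ p * (|Cb| + 2 * k₁) := mul_nonneg hp0.le (by positivity)
    have h2 : (0:ℝ) ≤ p * (p - 1) * k₁ ^ 2 :=
      mul_nonneg (mul_nonneg hp0.le (by linarith)) (sq_nonneg _)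
    linarith
  intro b f σ hCb hCσ hb hf hσ x hx
  set r := ‖x‖ with hr_def
  have hr : 0 < r := norm_pos_iff.mpr hx
  -- exponent arithmetic
  have e1 : r ^ (p - 2) * r = r ^ (p - 1) := by
    have h := Real.rpow_add hr (p - 2) 1
    rw [Real.rpow_one] at h
    rw [← h]; congr 1; ring
  have e2 : r ^ (p - 2) * r ^ 2 = r ^ p := by
    have h := Real.rpow_add hr (p - 2) 2
    rw [Real.rpow_two] at h
    rw [← h]; congr 1; ring
  have e3 : r ^ (p - 4) * r ^ 2 = r ^ (p - 2) := by
    have h := Real.rpow_add hr (p - 4) 2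
    rw [Real.rpow_two] at h
    rw [← h]; congr 1; ring
  have hR2 : (0:ℝ) ≤ r ^ (p - 2) := Real.rpow_nonneg hr.le _
  have hR4 : (0:ℝ) ≤ r ^ (p - 4) := Real.rpow_nonneg hr.le _
  have hRp : (0:ℝ) ≤ r ^ p := Real.rpow_nonneg hr.le _
  have hw : r ^ (p - 1) ≤ r ^ (p - 2) + r ^ p := by
    rcases le_total r 1 with h1 | h1
    · have := Real.rpow_le_rpow_of_exponent_ge hr h1 (by linarith : p - 2 ≤ p - 1)
      linarith
    · have := Real.rpow_le_rpow_of_exponent_le h1 (by linarith : p - 1 ≤ p)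
      linarith
  -- bound on the drift inner product
  have hBb : ⟪x, b x + f x⟫ ≤ (|Cb| + k₁) * r + k₁ * r ^ 2 := by
    have h0 := hb 0 x
    rw [sub_zero, inner_sub_left] at h0
    have h1 : ⟪b 0, x⟫ ≤ |Cb| * r := by
      calc ⟪b 0, x⟫ ≤ ‖b 0‖ * ‖x‖ := real_inner_le_norm _ _
        _ = Cb * r := by rw [hCb]
        _ ≤ |Cb| * r := by
            have : Cb ≤ |Cb| := le_abs_self _
            nlinarith
    have hbx : ⟪x, b x⟫ ≤ |Cb| * r := by
      rw [real_inner_comm]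
      nlinarith [sq_nonneg r]
    have hfx : ⟪x, f x⟫ ≤ k₁ * r + k₁ * r ^ 2 := by
      calc ⟪x, f x⟫ ≤ ‖x‖ * ‖f x‖ := real_inner_le_norm _ _
        _ ≤ r * (k₁ * (1 + r)) := by
            exact mul_le_mul_of_nonneg_left (hf x) (norm_nonneg x)
        _ = k₁ * r + k₁ * r ^ 2 := by ring
    rw [inner_add_right]
    linarith
  -- bounds on the diffusion
  set F := frobNorm (σ x) with hF_def
  have hF0 : 0 ≤ F := frobNorm_nonneg _
  have hF : F ≤ Cσ + k₁ * r := by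
    have := frobNorm_triangle (σ x) (σ 0)
    have h2 := hσ x 0
    rw [sub_zero] at h2
    rw [hCσ] at this
    linarith
  have hCσ0 : 0 ≤ Cσ := hCσ ▸ frobNorm_nonneg _
  have hF2 : F ^ 2 ≤ 2 * Cσ ^ 2 + 2 * k₁ ^ 2 * r ^ 2 := by
    nlinarith [sq_nonneg (Cσ - k₁ * r), mul_pos hk₁ hr]
  -- bound on the transpose-mulVec term
  set E := eucNorm ((σ x).transpose.mulVec (WithLp.equiv 2 (Fin d → ℝ) x)) with hE_def
  have hsum : ∑ i, ((WithLp.equiv 2 (Fin d → ℝ) x) i) ^ 2 = r ^ 2 := by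
    rw [hr_def, EuclideanSpace.norm_eq,
      Real.sq_sqrt (Finset.sum_nonneg fun _ _ => sq_nonneg _)]
    simp [Real.norm_eq_abs, sq_abs]
  have hE2 : E ^ 2 ≤ F ^ 2 * r ^ 2 := by
    have := eucNorm_mulVec_sq_le (σ x) (WithLp.equiv 2 (Fin d → ℝ) x)
    rwa [hsum] at this
  -- combine term by term
  have hT1 : r ^ (p - 2) * ⟪x, b x + f x⟫
      ≤ (|Cb| + k₁) * (r ^ (p - 2) + r ^ p) + k₁ * r ^ p := by
    calc r ^ (p - 2) * ⟪x, b x + f x⟫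
        ≤ r ^ (p - 2) * ((|Cb| + k₁) * r + k₁ * r ^ 2) :=
          mul_le_mul_of_nonneg_left hBb hR2
      _ = (|Cb| + k₁) * (r ^ (p - 2) * r) + k₁ * (r ^ (p - 2) * r ^ 2) := by ring
      _ = (|Cb| + k₁) * r ^ (p - 1) + k₁ * r ^ p := by rw [e1, e2]
      _ ≤ (|Cb| + k₁) * (r ^ (p - 2) + r ^ p) + k₁ * r ^ p := by
          have hc : (0:ℝ) ≤ |Cb| + k₁ := by positivity
          nlinarith
  have hT2 : r ^ (p - 2) * F ^ 2 ≤ 2 * Cσ ^ 2 * r ^ (p - 2) + 2 * k₁ ^ 2 * r ^ p := by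
    calc r ^ (p - 2) * F ^ 2
        ≤ r ^ (p - 2) * (2 * Cσ ^ 2 + 2 * k₁ ^ 2 * r ^ 2) :=
          mul_le_mul_of_nonneg_left hF2 hR2
      _ = 2 * Cσ ^ 2 * r ^ (p - 2) + 2 * k₁ ^ 2 * (r ^ (p - 2) * r ^ 2) := by ring
      _ = 2 * Cσ ^ 2 * r ^ (p - 2) + 2 * k₁ ^ 2 * r ^ p := by rw [e2]
  have hT3 : r ^ (p - 4) * E ^ 2 ≤ 2 * Cσ ^ 2 * r ^ (p - 2) + 2 * k₁ ^ 2 * r ^ p := by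
    calc r ^ (p - 4) * E ^ 2
        ≤ r ^ (p - 4) * (F ^ 2 * r ^ 2) := mul_le_mul_of_nonneg_left hE2 hR4
      _ = (r ^ (p - 4) * r ^ 2) * F ^ 2 := by ring
      _ = r ^ (p - 2) * F ^ 2 := by rw [e3]
      _ ≤ 2 * Cσ ^ 2 * r ^ (p - 2) + 2 * k₁ ^ 2 * r ^ p := hT2
  have h1 := mul_le_mul_of_nonneg_left hT1 hp0.le
  have h2 := mul_le_mul_of_nonneg_left hT2 (by linarith : (0:ℝ) ≤ p / 2)
  have h3 := mul_le_mul_of_nonneg_left hT3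
    (by nlinarith : (0:ℝ) ≤ p * (p - 2) / 2)
  linarith [h1, h2, h3]
end

section
/- Let d ≥ 1, K > 0 and M₁ ≥ 0. Suppose b : ℝ^d → ℝ^d is differentiable and satisfies ⟨b(y) − b(x), y − x⟩ ≤ −K‖y − x‖² for all x, y ∈ ℝ^d, and suppose φ : ℝ^d → ℝ is differentiable with 0 ≤ φ(x) ≤ 1 for all x and sup_{x ∈ ℝ^d} ‖b(x)‖·‖∇φ(x)‖ ≤ M₁. Let g(x) = φ(x)b(x). Then for all x, y ∈ ℝ^d, ⟨(Dg(x))y, y⟩ ≤ (−Kφ(x) + M₁)‖y‖² ≤ M₁‖y‖², where Dg(x) is the Fréchet derivative of g at x. -/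
open scoped RealInnerProductSpace
open Filter Topology

theorem stmt11 {d : ℕ} (hd : 1 ≤ d) (K M₁ : ℝ) (hK : 0 < K) (hM₁ : 0 ≤ M₁)
    (b : EuclideanSpace ℝ (Fin d) → EuclideanSpace ℝ (Fin d))
    (φ : EuclideanSpace ℝ (Fin d) → ℝ)
    (hbdiff : Differentiable ℝ b) (hφdiff : Differentiable ℝ φ)
    (hb : ∀ x y, ⟪b y - b x, y - x⟫ ≤ -K * ‖y - x‖ ^ 2)
    (hφ : ∀ x, 0 ≤ φ x ∧ φ x ≤ 1)
    (hbφ : ∀ x, ‖b x‖ * ‖fderiv ℝ φ x‖ ≤ M₁) :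
    ∀ x y : EuclideanSpace ℝ (Fin d),
      ⟪fderiv ℝ (fun z => φ z • b z) x y, y⟫ ≤ (-K * φ x + M₁) * ‖y‖ ^ 2 ∧
      (-K * φ x + M₁) * ‖y‖ ^ 2 ≤ M₁ * ‖y‖ ^ 2 := by
  intro x y
  -- key: ⟪Db x y, y⟫ ≤ -K ‖y‖²
  have key : ⟪fderiv ℝ b x y, y⟫ ≤ -K * ‖y‖ ^ 2 := by
    set f : ℝ → ℝ := fun t => ⟪b (x + t • y), y⟫ with hf
    have hline : HasDerivAt (fun t : ℝ => x + t • y) y 0 := by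
      simpa using ((hasDerivAt_id (0:ℝ)).smul_const y).const_add x
    have hderiv : HasDerivAt f ⟪fderiv ℝ b x y, y⟫ 0 := by
      have h2 : HasDerivAt (fun t : ℝ => b (x + t • y)) (fderiv ℝ b x y) 0 := by
        exact (hbdiff x).hasFDerivAt.comp_hasDerivAt_of_eq 0 hline (by simp)
      exact ((innerSL ℝ).flip y).hasFDerivAt.comp_hasDerivAt 0 h2
    have hslope : Tendsto (slope f 0) (𝓝[>] 0) (𝓝 ⟪fderiv ℝ b x y, y⟫) :=
      (hasDerivAt_iff_tendsto_slope.mp hderiv).mono_left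
        (nhdsWithin_mono 0 (fun t ht => ne_of_gt ht))
    have hbound : ∀ᶠ t in 𝓝[>] (0:ℝ), slope f 0 t ≤ -K * ‖y‖ ^ 2 := by
      filter_upwards [self_mem_nhdsWithin] with t ht
      have ht0 : (0:ℝ) < t := ht
      have h1 := hb x (x + t • y)
      have h2 : x + t • y - x = t • y := by abel
      rw [h2] at h1
      have h3 : ⟪b (x + t • y) - b x, t • y⟫ = t * (f t - f 0) := by
        rw [real_inner_smul_right, inner_sub_left]
        simp [hf]
      have h4 : ‖t • y‖ ^ 2 = t ^ 2 * ‖y‖ ^ 2 := by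
        rw [norm_smul, Real.norm_eq_abs, mul_pow, sq_abs]
      rw [h3, h4] at h1
      have h6 : f t - f 0 ≤ (-K * ‖y‖ ^ 2) * t := by nlinarith [ht0]
      rw [slope_def_field, sub_zero, div_le_iff₀ ht0]
      linarith [h6]
    have := le_of_tendsto hslope hbound
    exact this
  -- product rule
  have hprod : fderiv ℝ (fun z => φ z • b z) x y
      = φ x • (fderiv ℝ b x y) + (fderiv ℝ φ x y) • b x := by
    rw [fderiv_fun_smul (hφdiff x) (hbdiff x)]
    simp
  have hφx := hφ x
  have hbφx := hbφ x
  have hDφ : |fderiv ℝ φ x y| ≤ ‖fderiv ℝ φ x‖ * ‖y‖ := by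
    simpa [Real.norm_eq_abs] using (fderiv ℝ φ x).le_opNorm y
  have hby : |⟪b x, y⟫| ≤ ‖b x‖ * ‖y‖ := abs_real_inner_le_norm _ _
  have hsecond : (fderiv ℝ φ x y) * ⟪b x, y⟫ ≤ M₁ * ‖y‖ ^ 2 := by
    calc (fderiv ℝ φ x y) * ⟪b x, y⟫ ≤ |(fderiv ℝ φ x y) * ⟪b x, y⟫| := le_abs_self _
    _ = |fderiv ℝ φ x y| * |⟪b x, y⟫| := abs_mul _ _
    _ ≤ (‖fderiv ℝ φ x‖ * ‖y‖) * (‖b x‖ * ‖y‖) := by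
        apply mul_le_mul hDφ hby (abs_nonneg _)
        exact mul_nonneg (norm_nonneg _) (norm_nonneg _)
    _ = (‖b x‖ * ‖fderiv ℝ φ x‖) * ‖y‖ ^ 2 := by ring
    _ ≤ M₁ * ‖y‖ ^ 2 := by
        exact mul_le_mul_of_nonneg_right hbφx (sq_nonneg _)
  have hfirst : φ x * ⟪fderiv ℝ b x y, y⟫ ≤ -K * φ x * ‖y‖ ^ 2 := by
    have := mul_le_mul_of_nonneg_left key hφx.1
    linarith [this]
  constructor
  · rw [hprod, inner_add_left, real_inner_smul_left, real_inner_smul_left]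
    linarith [hfirst, hsecond]
  · have : 0 ≤ K * φ x * ‖y‖ ^ 2 := mul_nonneg (mul_nonneg hK.le hφx.1) (sq_nonneg _)
    nlinarith [this]
end
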